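/- For every prime p ≥ 5, ∑_{k=1}^{p-1} 1/k^2 ≡ 0 (mod p). -/

import Mathlib

lemma wh_sum_zmod (p : ℕ) [hp : Fact p.Prime] (h5 : 5 ≤ p) :
    (∑ k ∈ Finset.Icc 1 (p - 1), ((k : ZMod p)⁻¹) ^ 2) = 0 := by
  have hp1 : 1 < p := lt_of_lt_of_le (by norm_num) h5
  have hstep : ∀ k ∈ Finset.Icc 1 (p - 1), ((k : ZMod p)⁻¹) ^ 2 = (k : ZMod p) ^ (p - 3) := by
    intro k hk
    simp only [Finset.mem_Icc] at hk
    have hkp : k < p := lt_of_le_of_lt hk.2 (Nat.sub_lt (by omega) one_pos)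
    have hk0 : (k : ZMod p) ≠ 0 := by
      intro h
      rw [ZMod.natCast_eq_zero_iff] at h
      have hd := h
      have := Nat.le_of_dvd (by omega) hd
      omega
    have h1 : (k : ZMod p) ^ (p - 3) * (k : ZMod p) ^ 2 = 1 := by
      rw [← pow_add]
      have : p - 3 + 2 = p - 1 := by omega
      rw [this, ZMod.pow_card_sub_one_eq_one hk0]
    rw [inv_pow, eq_comm]
    exact eq_inv_of_mul_eq_one_left h1
  rw [Finset.sum_congr rfl hstep]
  have hbij : (∑ k ∈ Finset.Icc 1 (p - 1), (k : ZMod p) ^ (p - 3))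
      = ∑ x ∈ (Finset.univ : Finset (ZMod p)) \ {0}, x ^ (p - 3) := by
    refine Finset.sum_nbij' (fun k => (k : ZMod p)) (fun x => x.val) ?_ ?_ ?_ ?_ ?_
    · intro k hk
      simp only [Finset.mem_Icc] at hk
      have hkp : k < p := lt_of_le_of_lt hk.2 (Nat.sub_lt (by omega) one_pos)
      simp only [Finset.mem_sdiff, Finset.mem_univ, Finset.mem_singleton, true_and]
      intro h
      rw [ZMod.natCast_eq_zero_iff] at h
      have hd := h
      have := Nat.le_of_dvd (by omega) hd
      omega
    · intro x hx
      simp only [Finset.mem_sdiff, Finset.mem_univ, Finset.mem_singleton, true_and] at hx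
      have : x.val ≠ 0 := fun h => hx (by rwa [← ZMod.val_eq_zero])
      have hlt : x.val < p := x.val_lt
      simp only [Finset.mem_Icc]
      omega
    · intro k hk
      simp only [Finset.mem_Icc] at hk
      have hkp : k < p := lt_of_le_of_lt hk.2 (Nat.sub_lt (by omega) one_pos)
      exact ZMod.val_natCast_of_lt hkp
    · intro x _
      simp [ZMod.natCast_val, ZMod.cast_id]
    · intros; rfl
  rw [hbij]
  have h0 : (∑ x ∈ (Finset.univ : Finset (ZMod p)) \ {0}, x ^ (p - 3))
      = ∑ x : ZMod p, x ^ (p - 3) := by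
    rw [Finset.sum_sdiff_eq_sub (Finset.singleton_subset_iff.2 (Finset.mem_univ 0))]
    rw [Finset.sum_singleton, zero_pow (by omega), sub_zero]
  rw [h0]
  have hcard : Fintype.card (ZMod p) = p := ZMod.card p
  have := FiniteField.sum_pow_lt_card_sub_one (K := ZMod p) (p - 3) (by rw [hcard]; omega)
  exact this

/-- Wolstenholme (1852): for a prime `p ≥ 5`, `∑_{k=1}^{p-1} 1/k² ≡ 0 (mod p)` in `ℤ_p`. -/
theorem wolstenholme_harmonic_sq (p : ℕ) [hp : Fact p.Prime] (h5 : 5 ≤ p) :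
    ∃ z : ℤ_[p],
      (∑ k ∈ Finset.Icc 1 (p - 1), (1 : ℚ_[p]) / (k : ℚ_[p]) ^ 2)
      = (p : ℚ_[p]) * (z : ℚ_[p]) := by
  have hp1 : 1 < p := lt_of_lt_of_le (by norm_num) h5
  -- norm facts
  have hnorm : ∀ k ∈ Finset.Icc 1 (p - 1), ‖(k : ℚ_[p])‖ = 1 := by
    intro k hk
    simp only [Finset.mem_Icc] at hk
    have hkp : k < p := lt_of_le_of_lt hk.2 (Nat.sub_lt (by omega) one_pos)
    have hle : ‖((k : ℤ) : ℚ_[p])‖ ≤ 1 := Padic.norm_int_le_one k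
    have hnlt : ¬ ‖((k : ℤ) : ℚ_[p])‖ < 1 := by
      rw [Padic.norm_intCast_lt_one_iff]
      intro hd
      have := Int.le_of_dvd (by exact_mod_cast (by omega : 0 < k)) hd
      omega
    have : ‖((k : ℤ) : ℚ_[p])‖ = 1 := le_antisymm hle (not_lt.1 hnlt)
    simpa using this
  -- terms as p-adic integers
  have hmem : ∀ k ∈ Finset.Icc 1 (p - 1), ‖(1 : ℚ_[p]) / (k : ℚ_[p]) ^ 2‖ ≤ 1 := by
    intro k hk
    rw [norm_div, norm_pow, hnorm k hk]
    simp
  set t : ℕ → ℤ_[p] := fun k =>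
    if hk : k ∈ Finset.Icc 1 (p - 1) then ⟨(1 : ℚ_[p]) / (k : ℚ_[p]) ^ 2, hmem k hk⟩ else 0
    with ht
  set s : ℤ_[p] := ∑ k ∈ Finset.Icc 1 (p - 1), t k with hs
  have hcoe : ((s : ℤ_[p]) : ℚ_[p]) = ∑ k ∈ Finset.Icc 1 (p - 1), (1 : ℚ_[p]) / (k : ℚ_[p]) ^ 2 := by
    have hrfl : ∀ x : ℤ_[p], (x : ℚ_[p]) = PadicInt.Coe.ringHom (p := p) x := fun _ => rfl
    rw [hs, hrfl, map_sum]
    simp only [← hrfl]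
    refine Finset.sum_congr rfl fun k hk => ?_
    rw [ht]; simp [hk]
  -- reduction mod p
  have hred : ∀ k ∈ Finset.Icc 1 (p - 1), PadicInt.toZMod (t k) = ((k : ZMod p)⁻¹) ^ 2 := by
    intro k hk
    have hk0 : (k : ℚ_[p]) ≠ 0 := by
      intro h
      have := hnorm k hk
      rw [h] at this; simp at this
    have hmul : t k * ((k : ℤ_[p])) ^ 2 = 1 := by
      apply PadicInt.ext
      push_cast
      rw [show ((t k : ℤ_[p]) : ℚ_[p]) = (1 : ℚ_[p]) / (k : ℚ_[p]) ^ 2 by rw [ht]; simp [hk]]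
      field_simp
    have := congrArg PadicInt.toZMod hmul
    rw [map_mul, map_pow, map_one, map_natCast] at this
    have h2 : PadicInt.toZMod (t k) = ((k : ZMod p) ^ 2)⁻¹ := eq_inv_of_mul_eq_one_left this
    rw [h2, inv_pow]
  have hs0 : PadicInt.toZMod s = 0 := by
    rw [hs, map_sum, Finset.sum_congr rfl hred]
    exact wh_sum_zmod p h5
  have hker : s ∈ RingHom.ker (PadicInt.toZMod : ℤ_[p] →+* ZMod p) := hs0
  rw [PadicInt.ker_toZMod, PadicInt.maximalIdeal_eq_span_p, Ideal.mem_span_singleton] at hker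
  obtain ⟨z, hz⟩ := hker
  refine ⟨z, ?_⟩
  rw [← hcoe, hz]
  push_cast
  ring
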